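/- For every positive integer n and every natural number r, 𝒢(n, r) = 0 if and only if r < z_1(n). -/

import Mathlib

/-- `IsZeck n l` says that `l` is the Zeckendorf representation of `n`, recorded as the
list of indices of the Fibonacci parts in increasing order: every index is at least `2`,
consecutive indices differ by at least `2` (no two consecutive Fibonacci numbers), and the
corresponding Fibonacci numbers sum to `n`.  The parts of the Zeckendorf representation in
increasing order are then `z₁(n) = Nat.fib l.headI`, `z₂(n) = Nat.fib (l.getD 1 0)`, etc. -/
def IsZeck (n : ℕ) (l : List ℕ) : Prop :=
  (∀ i ∈ l, 2 ≤ i) ∧ l.Chain' (fun a b => a + 2 ≤ b) ∧ (l.map Nat.fib).sum = n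

/-- The Grundy values of single-heap Fibonacci nim positions `(n, r)`, where `n` is the heap
size and `r` is the maximal number of tokens that may be removed on the next move:
`grundy n r` is the least natural number not of the form
`grundy (n - k) (min (2 * k) (n - k))` for some `k` with `1 ≤ k ≤ min r n`.
In particular `grundy 0 r = 0` and `grundy n 0 = 0`. -/
noncomputable def grundy (n r : ℕ) : ℕ :=
  sInf {m : ℕ | ∀ k, 1 ≤ k → k ≤ min r n → grundy (n - k) (min (2 * k) (n - k)) ≠ m}
termination_by n
decreasing_by
  have : k ≤ n := le_trans ‹k ≤ min r n› (min_le_right _ _)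
  omega

lemma grundy_def (n r : ℕ) : grundy n r =
    sInf {m : ℕ | ∀ k, 1 ≤ k → k ≤ min r n → grundy (n - k) (min (2 * k) (n - k)) ≠ m} := by
  rw [grundy]

lemma grundy_set_nonempty (n r : ℕ) :
    {m : ℕ | ∀ k, 1 ≤ k → k ≤ min r n →
      grundy (n - k) (min (2 * k) (n - k)) ≠ m}.Nonempty := by
  refine ⟨(Finset.Icc 1 (min r n)).sup (fun k => grundy (n - k) (min (2 * k) (n - k))) + 1, ?_⟩
  intro k h1 h2 hEq
  have h : grundy (n - k) (min (2 * k) (n - k)) ≤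
      (Finset.Icc 1 (min r n)).sup (fun k => grundy (n - k) (min (2 * k) (n - k))) :=
    Finset.le_sup (f := fun k => grundy (n - k) (min (2 * k) (n - k)))
      (Finset.mem_Icc.mpr ⟨h1, h2⟩)
  omega

lemma grundy_eq_zero_iff_moves (n r : ℕ) :
    grundy n r = 0 ↔ ∀ k, 1 ≤ k → k ≤ min r n →
      grundy (n - k) (min (2 * k) (n - k)) ≠ 0 := by
  rw [grundy_def]
  constructor
  · intro h
    have h0 := Nat.sInf_mem (grundy_set_nonempty n r)
    rw [h] at h0
    exact h0
  · intro h
    exact Nat.eq_zero_of_le_zero (Nat.sInf_le h)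

lemma fib_succ_le_two_fib {c : ℕ} (hc : 1 ≤ c) : Nat.fib (c + 1) ≤ 2 * Nat.fib c := by
  obtain ⟨d, rfl⟩ : ∃ d, c = d + 1 := ⟨c - 1, by omega⟩
  rw [Nat.fib_add_two]
  have h2 : Nat.fib d ≤ Nat.fib (d + 1) := Nat.fib_mono (by omega)
  omega

lemma two_fib_lt_fib_add_two {a : ℕ} (ha : 2 ≤ a) : 2 * Nat.fib a < Nat.fib (a + 2) := by
  rw [Nat.fib_add_two]
  have h2 : Nat.fib a < Nat.fib (a + 1) := Nat.fib_lt_fib_succ ha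
  omega

/-- Key lemma: for `1 ≤ k < fib a`, `fib a - k` has a Zeckendorf representation that is
nonempty, with smallest part at most `2 k`, and with all indices strictly below `a`. -/
lemma zeck_fib_sub (a : ℕ) (ha : 2 ≤ a) :
    ∀ k, 1 ≤ k → k < Nat.fib a →
    ∃ l, IsZeck (Nat.fib a - k) l ∧ l ≠ [] ∧ Nat.fib l.headI ≤ 2 * k ∧ ∀ i ∈ l, i + 1 ≤ a := by
  induction a using Nat.strong_induction_on with
  | _ a IH =>
  intro k hk1 hk2
  obtain ⟨c, rfl⟩ : ∃ c, a = c + 2 := ⟨a - 2, by omega⟩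
  have hfib : Nat.fib (c + 2) = Nat.fib c + Nat.fib (c + 1) := Nat.fib_add_two
  set m := Nat.fib (c + 2) - k with hm
  have hm1 : 1 ≤ m := by omega
  rcases lt_trichotomy m (Nat.fib (c + 1)) with hlt | heq | hgt
  · -- m < fib (c+1) : use IH at c+1 with k' = fib (c+1) - m
    have hc1 : 1 ≤ c := by
      by_contra h
      have hc0 : c = 0 := by omega
      subst hc0
      have e1 : Nat.fib (0 + 1) = 1 := rfl
      omega
    obtain ⟨l, hz, hne, hhead, hbd⟩ := IH (c + 1) (by omega) (by omega)
      (Nat.fib (c + 1) - m) (by omega) (by omega)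
    have hml : Nat.fib (c + 1) - (Nat.fib (c + 1) - m) = m := by omega
    rw [hml] at hz
    refine ⟨l, hz, hne, ?_, fun i hi => by have := hbd i hi; omega⟩
    have hk' : Nat.fib (c + 1) - m ≤ k := by
      have := Nat.fib_mono (Nat.le_succ (c + 1))
      omega
    omega
  · -- m = fib (c+1) : use [c+1]
    have hkc : k = Nat.fib c := by omega
    have hc1 : 1 ≤ c := by
      by_contra h
      have hc0 : c = 0 := by omega
      subst hc0
      have e0 : Nat.fib 0 = 0 := rfl
      omega
    refine ⟨[c + 1], ⟨?_, ?_, ?_⟩, by simp, ?_, ?_⟩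
    · intro i hi; simp at hi; omega
    · exact List.isChain_singleton _
    · simp [← heq]
    · simpa [hkc] using fib_succ_le_two_fib hc1
    · intro i hi; simp at hi; omega
  · -- m > fib (c+1) : use IH at c, append c+1
    have hkc : k < Nat.fib c := by omega
    have hc2 : 2 ≤ c := by
      by_contra h
      have hfc : Nat.fib c ≤ 1 := by interval_cases c <;> decide
      omega
    obtain ⟨l, ⟨hz1, hz2, hz3⟩, hne, hhead, hbd⟩ := IH c (by omega) (by omega) k hk1 hkc
    refine ⟨l ++ [c + 1], ⟨?_, ?_, ?_⟩, by simp, ?_, ?_⟩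
    · intro i hi
      rcases List.mem_append.mp hi with h | h
      · exact hz1 i h
      · simp at h; omega
    · refine List.isChain_append.mpr ?_
      refine ⟨hz2, List.isChain_singleton _, ?_⟩
      intro x hx y hy
      simp at hy
      have hxl : x ∈ l := List.mem_of_mem_getLast? hx
      have := hbd x hxl
      omega
    · rw [List.map_append, List.sum_append]
      simp [hz3]
      omega
    · obtain ⟨x, xs, rfl⟩ := List.exists_cons_of_ne_nil hne
      simpa using hhead
    · intro i hi
      rcases List.mem_append.mp hi with h | h
      · have := hbd i h; omega
      · simp at h; omega

lemma IsZeck.ne_nil {n : ℕ} {l : List ℕ} (hn : 0 < n) (hl : IsZeck n l) : l ≠ [] := by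
  rintro rfl
  simp [IsZeck] at hl
  omega

/-- For `1 ≤ k < z₁(n)`, `n - k` has a Zeckendorf representation with smallest part ≤ 2k. -/
lemma zeck_sub {n : ℕ} {l : List ℕ} (hl : IsZeck n l) (hn : 0 < n) (k : ℕ) (hk1 : 1 ≤ k)
    (hk2 : k < Nat.fib l.headI) :
    ∃ l', IsZeck (n - k) l' ∧ l' ≠ [] ∧ Nat.fib l'.headI ≤ 2 * k := by
  obtain ⟨a, t, rfl⟩ := List.exists_cons_of_ne_nil (hl.ne_nil hn)
  obtain ⟨h1, h2, h3⟩ := hl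
  simp only [List.headI_cons] at hk2
  have ha2 : 2 ≤ a := h1 a (by simp)
  obtain ⟨l', ⟨hz1, hz2, hz3⟩, hne, hhead, hbd⟩ := zeck_fib_sub a ha2 k hk1 hk2
  refine ⟨l' ++ t, ⟨?_, ?_, ?_⟩, by simp [hne], ?_⟩
  · intro i hi
    rcases List.mem_append.mp hi with h | h
    · exact hz1 i h
    · exact h1 i (by simp [h])
  · refine List.isChain_append.mpr ?_
    refine ⟨hz2, (List.isChain_cons.mp h2).2, ?_⟩
    intro x hx y hy
    have hxl : x ∈ l' := List.mem_of_mem_getLast? hx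
    have hx1 := hbd x hxl
    have hy1 := (List.isChain_cons.mp h2).1 y hy
    omega
  · rw [List.map_append, List.sum_append, hz3]
    simp only [List.map_cons, List.sum_cons] at h3
    omega
  · obtain ⟨x, xs, rfl⟩ := List.exists_cons_of_ne_nil hne
    simpa using hhead

lemma IsZeck.fib_headI_le {n : ℕ} {l : List ℕ} (hn : 0 < n) (hl : IsZeck n l) :
    Nat.fib l.headI ≤ n := by
  obtain ⟨a, t, rfl⟩ := List.exists_cons_of_ne_nil (hl.ne_nil hn)
  obtain ⟨h1, h2, h3⟩ := hl
  simp only [List.map_cons, List.sum_cons] at h3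
  simp only [List.headI_cons]
  omega

lemma grundy_zero (r : ℕ) : grundy 0 r = 0 := by
  rw [grundy_eq_zero_iff_moves]
  intro k h1 h2
  simp at h2
  omega

/-- For every positive integer `n` and every natural number `r`, `𝒢(n, r) = 0` if and only
if `r < z₁(n)`. -/
theorem grundy_eq_zero_iff (n r : ℕ) (hn : 0 < n) (l : List ℕ) (hl : IsZeck n l) :
    grundy n r = 0 ↔ r < Nat.fib l.headI := by
  induction n using Nat.strong_induction_on generalizing r l with
  | _ n IH =>
  constructor
  · -- grundy n r = 0 → r < fib l.headI ; contrapositive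
    intro hG
    by_contra hr
    push_neg at hr
    obtain ⟨a, t, rfl⟩ := List.exists_cons_of_ne_nil (hl.ne_nil hn)
    obtain ⟨h1, h2, h3⟩ := hl
    simp only [List.headI_cons] at hr ⊢
    have ha2 : 2 ≤ a := h1 a (by simp)
    have hfa : 0 < Nat.fib a := Nat.fib_pos.mpr (by omega)
    have hfan : Nat.fib a ≤ n := by
      simp only [List.map_cons, List.sum_cons] at h3; omega
    -- move k = fib a leads to a zero position
    have hmove := (grundy_eq_zero_iff_moves n r).mp hG (Nat.fib a) hfa
      (le_min hr hfan)
    apply hmove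
    rcases eq_or_lt_of_le hfan with heq | hlt
    · -- n = fib a
      rw [← heq]
      simp [grundy_zero]
    · -- t is a Zeckendorf rep of n - fib a
      have hzt : IsZeck (n - Nat.fib a) t := by
        refine ⟨fun i hi => h1 i (by simp [hi]), (List.isChain_cons.mp h2).2, ?_⟩
        simp only [List.map_cons, List.sum_cons] at h3
        omega
      have hpos : 0 < n - Nat.fib a := by omega
      have htne := hzt.ne_nil hpos
      obtain ⟨b, t', rfl⟩ := List.exists_cons_of_ne_nil htne
      have hb : a + 2 ≤ b := (List.isChain_cons.mp h2).1 b rfl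
      rw [IH (n - Nat.fib a) (by omega) _ hpos _ hzt]
      simp only [List.headI_cons]
      have hfb : Nat.fib (a + 2) ≤ Nat.fib b := Nat.fib_mono hb
      have h2f : 2 * Nat.fib a < Nat.fib (a + 2) := two_fib_lt_fib_add_two ha2
      have : min (2 * Nat.fib a) (n - Nat.fib a) ≤ 2 * Nat.fib a := min_le_left _ _
      omega
  · -- r < fib l.headI → grundy n r = 0
    intro hr
    rw [grundy_eq_zero_iff_moves]
    intro k hk1 hk2
    have hkr : k ≤ r := le_trans hk2 (min_le_left _ _)
    have hkh : k < Nat.fib l.headI := by omega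
    have hkn : k < n := lt_of_lt_of_le hkh (hl.fib_headI_le hn)
    obtain ⟨l', hz', hne', hhead'⟩ := zeck_sub hl hn k hk1 hkh
    have hpos : 0 < n - k := by omega
    intro hcon
    rw [IH (n - k) (by omega) _ hpos _ hz'] at hcon
    have hle : Nat.fib l'.headI ≤ n - k := hz'.fib_headI_le hpos
    rcases min_cases (2 * k) (n - k) with ⟨he, _⟩ | ⟨he, _⟩ <;> omega
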